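/- Let p be a prime, k = 𝔽_p, and let u be a p-ary t-design of block size b on a set of size v, with coefficient μ_t. If j ≤ t and C(b-j, t-j) ≢ 0 (mod p), then u is also a j-design with coefficient μ_j = (C(v-j, t-j) / C(b-j, t-j)) · μ_t, where the division is carried out in 𝔽_p. -/

import Mathlib

open Finset in
lemma pary_between_card {α : Type*} [Fintype α] [DecidableEq α] {W Y : Finset α} {j t : ℕ}
    (hW : W.card = j) (hjt : j ≤ t) (hWY : W ⊆ Y) :
    (Finset.univ.filter (fun Z : Finset α => W ⊆ Z ∧ Z ⊆ Y ∧ Z.card = t)).card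
      = (Y.card - j).choose (t - j) := by
  subst hW
  rw [← Finset.card_sdiff_of_subset hWY, ← Finset.card_powersetCard (t - W.card) (Y \ W)]
  apply Finset.card_nbij' (fun Z => Z \ W) (fun S => S ∪ W)
  · intro Z hZ
    simp only [Finset.mem_coe, Finset.mem_filter, Finset.mem_univ, true_and] at hZ
    obtain ⟨h1, h2, h3⟩ := hZ
    rw [Finset.mem_coe, Finset.mem_powersetCard]
    refine ⟨Finset.sdiff_subset_sdiff h2 le_rfl, ?_⟩
    rw [Finset.card_sdiff_of_subset h1, h3]
  · intro S hS
    rw [Finset.mem_coe, Finset.mem_powersetCard] at hS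
    obtain ⟨hSub, hSc⟩ := hS
    have hdisj : Disjoint S W := Finset.disjoint_of_subset_left hSub Finset.sdiff_disjoint
    simp only [Finset.mem_coe, Finset.mem_filter, Finset.mem_univ, true_and]
    refine ⟨Finset.subset_union_right, ?_, ?_⟩
    · exact Finset.union_subset (hSub.trans Finset.sdiff_subset) hWY
    · rw [Finset.card_union_of_disjoint hdisj, hSc]
      omega
  · intro Z hZ
    simp only [Finset.mem_coe, Finset.mem_filter, Finset.mem_univ, true_and] at hZ
    exact Finset.sdiff_union_of_subset hZ.1
  · intro S hS
    rw [Finset.mem_coe, Finset.mem_powersetCard] at hS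
    have hdisj : Disjoint S W := Finset.disjoint_of_subset_left hS.1 Finset.sdiff_disjoint
    show (S ∪ W) \ W = S
    rw [Finset.union_sdiff_right, Finset.sdiff_eq_self_of_disjoint hdisj]

/-- A `p`-ary `t`-design of block size `b` on `[v]` with coefficient `μt` is also a
`j`-design with coefficient `C(v-j, t-j)/C(b-j, t-j) · μt` whenever
`C(b-j, t-j) ≢ 0 (mod p)`. -/
theorem pary_design_coefficient (p v b t j : ℕ) [Fact p.Prime]
    (htb : t ≤ b) (hbv : b ≤ v) (hjt : j ≤ t)
    (u : Finset (Fin v) → ZMod p) (μt : ZMod p)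
    (hu : ∀ Z : Finset (Fin v), Z.card = t →
      ∑ Y ∈ Finset.univ.filter (fun Y : Finset (Fin v) => Z ⊆ Y ∧ Y.card = b), u Y = μt)
    (hnz : (((b - j).choose (t - j) : ℕ) : ZMod p) ≠ 0) :
    ∀ W : Finset (Fin v), W.card = j →
      ∑ Y ∈ Finset.univ.filter (fun Y : Finset (Fin v) => W ⊆ Y ∧ Y.card = b), u Y =
        (((v - j).choose (t - j) : ℕ) : ZMod p) / (((b - j).choose (t - j) : ℕ) : ZMod p) * μt := by
  intro W hW
  classical
  set A : Finset (Finset (Fin v)) :=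
    Finset.univ.filter (fun Z : Finset (Fin v) => W ⊆ Z ∧ Z.card = t) with hA
  set C : Finset (Finset (Fin v)) :=
    Finset.univ.filter (fun Y : Finset (Fin v) => W ⊆ Y ∧ Y.card = b) with hC
  have hT1 : ∑ Z ∈ A, ∑ Y ∈ Finset.univ.filter
      (fun Y : Finset (Fin v) => Z ⊆ Y ∧ Y.card = b), u Y
      = (((v - j).choose (t - j) : ℕ) : ZMod p) * μt := by
    have hcard : A.card = (v - j).choose (t - j) := by
      have : A = Finset.univ.filter
          (fun Z : Finset (Fin v) => W ⊆ Z ∧ Z ⊆ Finset.univ ∧ Z.card = t) := by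
        apply Finset.filter_congr
        intro Z _
        simp [Finset.subset_univ]
      rw [this, pary_between_card hW hjt (Finset.subset_univ W)]
      simp
    rw [Finset.sum_congr rfl (fun Z hZ => hu Z (Finset.mem_filter.mp hZ).2.2),
      Finset.sum_const, hcard, nsmul_eq_mul]
  have hswap : ∑ Z ∈ A, ∑ Y ∈ Finset.univ.filter
      (fun Y : Finset (Fin v) => Z ⊆ Y ∧ Y.card = b), u Y
      = ∑ Y ∈ C, ∑ Z ∈ Finset.univ.filter
      (fun Z : Finset (Fin v) => W ⊆ Z ∧ Z ⊆ Y ∧ Z.card = t), u Y := by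
    apply Finset.sum_comm'
    intro Z Y
    simp only [hA, hC, Finset.mem_filter, Finset.mem_univ, true_and]
    constructor
    · rintro ⟨⟨h1, h2⟩, h3, h4⟩
      exact ⟨⟨h1, h3, h2⟩, h1.trans h3, h4⟩
    · rintro ⟨⟨h1, h2, h3⟩, _, h4⟩
      exact ⟨⟨h1, h3⟩, h2, h4⟩
  have hT2 : ∑ Y ∈ C, ∑ Z ∈ Finset.univ.filter
      (fun Z : Finset (Fin v) => W ⊆ Z ∧ Z ⊆ Y ∧ Z.card = t), u Y
      = (((b - j).choose (t - j) : ℕ) : ZMod p) * ∑ Y ∈ C, u Y := by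
    rw [Finset.mul_sum]
    apply Finset.sum_congr rfl
    intro Y hY
    simp only [hC, Finset.mem_filter, Finset.mem_univ, true_and] at hY
    rw [Finset.sum_const, pary_between_card hW hjt hY.1, hY.2, nsmul_eq_mul]
  have key : (((b - j).choose (t - j) : ℕ) : ZMod p) * ∑ Y ∈ C, u Y
      = (((v - j).choose (t - j) : ℕ) : ZMod p) * μt := by
    rw [← hT2, ← hswap, hT1]
  rw [div_mul_eq_mul_div, eq_div_iff hnz, mul_comm _ ((((b - j).choose (t - j) : ℕ) : ZMod p)), key]
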